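/- Let Q be a countable state space, P a stochastic matrix, π a stationary distribution, ℓ : Q → Σ a labeling, f : Σ^n → [a,b], and t ≥ n, N = t − n + 1. Then E over state paths q ∈ Q^t (with probability π(q₁)∏ P(q_j,q_{j+1})) of (1/N) Σ_{i=1}^N f(ℓ(q_i),...,ℓ(q_{i+n-1})) equals Σ_{q^B ∈ Q^n} f(ℓ(q₁^B),...,ℓ(q_n^B)) · π(q₁^B) · ∏_{j=1}^{n-1} P(q_j^B, q_{j+1}^B). -/

import Mathlib

open scoped Classical

/-- Path probability of a finite state sequence under initial distribution `π`
and transition matrix `P`. -/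
noncomputable def pathProb {Q : Type*} (π : Q → ℝ) (P : Q → Q → ℝ) (t : ℕ) (ht : 1 ≤ t)
    (w : Fin t → Q) : ℝ :=
  π (w ⟨0, ht⟩) *
    ∏ j : Fin (t - 1),
      P (w ⟨j.val, by have := j.isLt; omega⟩) (w ⟨j.val + 1, by have := j.isLt; omega⟩)

open scoped ENNReal

section Aux
variable {Q : Type*} [Countable Q] (π : Q → ℝ) (P : Q → Q → ℝ)

noncomputable def ePath (t : ℕ) (w : Fin (t+1) → Q) : ℝ≥0∞ :=
  ENNReal.ofReal (π (w 0)) * ∏ j : Fin t, ENNReal.ofReal (P (w j.castSucc) (w j.succ))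

def snocEquiv (t : ℕ) (Q : Type*) : (Fin (t+1) → Q) × Q ≃ (Fin (t+2) → Q) where
  toFun := fun p => Fin.snoc p.1 p.2
  invFun := fun w => (Fin.init w, w (Fin.last (t+1)))
  left_inv := fun p => by simp [Fin.init_snoc, Fin.snoc_last]
  right_inv := fun w => by simp [Fin.snoc_init_self]

variable (hPnn : ∀ q q', 0 ≤ P q q') (hProw : ∀ q, ∑' q', P q q' = 1)
    (hπnn : ∀ q, 0 ≤ π q) (hπ1 : ∑' q, π q = 1)
    (hstat : ∀ q', ∑' q, π q * P q q' = π q')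

omit [Countable Q] in
include hProw in
lemma row_summable (q : Q) : Summable (P q) := by
  by_contra h
  have h1 := hProw q
  rw [tsum_eq_zero_of_not_summable h] at h1
  exact one_ne_zero h1.symm

omit [Countable Q] in
include hπ1 in
lemma pi_summable : Summable π := by
  by_contra h
  rw [tsum_eq_zero_of_not_summable h] at hπ1
  exact one_ne_zero hπ1.symm

omit [Countable Q] in
include hPnn hProw in
lemma row_e (q : Q) : ∑' q', ENNReal.ofReal (P q q') = 1 := by
  rw [← ENNReal.ofReal_tsum_of_nonneg (hPnn q) (row_summable P hProw q), hProw q,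
    ENNReal.ofReal_one]

omit [Countable Q] in
include hπnn hπ1 in
lemma pi_e : ∑' q, ENNReal.ofReal (π q) = 1 := by
  rw [← ENNReal.ofReal_tsum_of_nonneg hπnn (pi_summable π hπ1), hπ1, ENNReal.ofReal_one]

omit [Countable Q] in
include hPnn hProw hπnn hπ1 hstat in
lemma stat_e (r : Q) :
    ∑' q, ENNReal.ofReal (π q) * ENNReal.ofReal (P q r) = ENNReal.ofReal (π r) := by
  have hsum : Summable (fun q => π q * P q r) := by
    refine Summable.of_nonneg_of_le (fun q => mul_nonneg (hπnn q) (hPnn q r))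
      (fun q => ?_) (pi_summable π hπ1)
    have hle : P q r ≤ 1 := by
      rw [← hProw q]
      exact Summable.le_tsum (row_summable P hProw q) r (fun j _ => hPnn q j)
    calc π q * P q r ≤ π q * 1 := mul_le_mul_of_nonneg_left hle (hπnn q)
      _ = π q := mul_one _
  calc ∑' q, ENNReal.ofReal (π q) * ENNReal.ofReal (P q r)
      = ∑' q, ENNReal.ofReal (π q * P q r) := by
        refine tsum_congr fun q => (ENNReal.ofReal_mul (hπnn q)).symm
    _ = ENNReal.ofReal (∑' q, π q * P q r) :=
        (ENNReal.ofReal_tsum_of_nonneg (fun q => mul_nonneg (hπnn q) (hPnn q r)) hsum).symm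
    _ = ENNReal.ofReal (π r) := by rw [hstat r]

include hPnn hProw hπnn hπ1 hstat in
lemma consSum (t : ℕ) (g : (Fin (t+1) → Q) → ℝ≥0∞) :
    ∑' w : Fin (t+2) → Q, ePath π P (t+1) w * g (fun j : Fin (t+1) => w j.succ)
      = ∑' w : Fin (t+1) → Q, ePath π P t w * g w := by
  rw [← (Fin.consEquiv (fun _ : Fin (t+2) => Q)).tsum_eq]
  have key : (fun p : Q × (Fin (t+1) → Q) =>
      ePath π P (t+1) ((Fin.consEquiv fun _ => Q) p) *
        g (fun j : Fin (t+1) => (Fin.consEquiv fun _ => Q) p j.succ))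
    = fun p : Q × (Fin (t+1) → Q) =>
      (ENNReal.ofReal (π p.1) * ENNReal.ofReal (P p.1 (p.2 0))) * (
        (∏ j : Fin t, ENNReal.ofReal (P (p.2 j.castSucc) (p.2 j.succ))) * g p.2) := by
    funext p
    obtain ⟨q, w⟩ := p
    unfold ePath
    simp only [Fin.consEquiv_apply, Fin.cons_succ, Fin.cons_zero, Fin.prod_univ_succ,
      Fin.castSucc_zero, Fin.succ_zero_eq_one, ← Fin.succ_castSucc]
    rw [show (fun j : Fin (t+1) => w j) = w from rfl]
    ring
  rw [key, ENNReal.tsum_prod', ENNReal.tsum_comm]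
  refine tsum_congr fun w => ?_
  dsimp only
  rw [ENNReal.tsum_mul_right, stat_e π P hPnn hProw hπnn hπ1 hstat (w 0)]
  unfold ePath; ring

include hPnn hProw in
lemma snocSum (t : ℕ) (g : (Fin (t+1) → Q) → ℝ≥0∞) :
    ∑' w : Fin (t+2) → Q, ePath π P (t+1) w * g (Fin.init w)
      = ∑' w : Fin (t+1) → Q, ePath π P t w * g w := by
  rw [← (snocEquiv t Q).tsum_eq]
  have key : (fun p : (Fin (t+1) → Q) × Q =>
      ePath π P (t+1) (snocEquiv t Q p) * g (Fin.init (snocEquiv t Q p)))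
    = fun p : (Fin (t+1) → Q) × Q =>
        (ePath π P t p.1 * g p.1) * ENNReal.ofReal (P (p.1 (Fin.last t)) p.2) := by
    funext p
    obtain ⟨w, q⟩ := p
    have he : snocEquiv t Q (w, q) = Fin.snoc w q := rfl
    rw [he]
    unfold ePath
    rw [Fin.init_snoc]
    rw [Fin.prod_univ_castSucc (fun j : Fin (t+1) =>
      ENNReal.ofReal (P ((Fin.snoc w q : Fin (t+2) → Q) j.castSucc)
        ((Fin.snoc w q : Fin (t+2) → Q) j.succ)))]
    have h0 : (Fin.snoc w q : Fin (t+2) → Q) 0 = w 0 := by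
      rw [← Fin.castSucc_zero, Fin.snoc_castSucc]
    have h2 : ∀ j : Fin t,
        ENNReal.ofReal (P ((Fin.snoc w q : Fin (t+2) → Q) j.castSucc.castSucc)
          ((Fin.snoc w q : Fin (t+2) → Q) j.castSucc.succ))
        = ENNReal.ofReal (P (w j.castSucc) (w j.succ)) := by
      intro j
      rw [Fin.succ_castSucc, Fin.snoc_castSucc, Fin.snoc_castSucc]
    have h3 : (Fin.snoc w q : Fin (t+2) → Q) (Fin.last t).castSucc = w (Fin.last t) :=
      Fin.snoc_castSucc _ _ _
    have h4 : (Fin.snoc w q : Fin (t+2) → Q) (Fin.last t).succ = q := by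
      rw [Fin.succ_last, Fin.snoc_last]
    rw [h0, h3, h4, Finset.prod_congr rfl (fun j _ => h2 j)]
    ring
  rw [key, ENNReal.tsum_prod']
  refine tsum_congr fun w => ?_
  dsimp only
  rw [ENNReal.tsum_mul_left, row_e P hPnn hProw, mul_one]


include hPnn hProw hπnn hπ1 in
lemma mass : ∀ t : ℕ, ∑' w : Fin (t+1) → Q, ePath π P t w = 1 := by
  intro t
  induction t with
  | zero =>
    rw [← (Equiv.funUnique (Fin 1) Q).symm.tsum_eq]
    have : (fun q : Q => ePath π P 0 ((Equiv.funUnique (Fin 1) Q).symm q))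
        = fun q => ENNReal.ofReal (π q) := by
      funext q
      unfold ePath
      rw [Fin.prod_univ_zero, mul_one]
      rfl
    rw [this, pi_e π hπnn hπ1]
  | succ t ih =>
    have h := snocSum π P hPnn hProw t (fun _ => 1)
    simpa using h.trans (by simpa using ih)

include hPnn hProw in
lemma margFirst : ∀ (k m : ℕ) (g : (Fin (m+1) → Q) → ℝ≥0∞),
    ∑' w : Fin (m+k+1) → Q,
      ePath π P (m+k) w * g (fun j : Fin (m+1) => w ⟨j.val, by have := j.isLt; omega⟩)
      = ∑' u : Fin (m+1) → Q, ePath π P m u * g u := by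
  intro k
  induction k with
  | zero =>
    intro m g
    refine tsum_congr fun w => ?_
    have : (fun j : Fin (m+1) => w ⟨j.val, by have := j.isLt; omega⟩) = w :=
      funext fun j => congrArg w (Fin.ext rfl)
    rw [this]
    rfl
  | succ k ih =>
    intro m g
    have step := snocSum π P hPnn hProw (m+k)
      (fun v : Fin (m+k+1) → Q => g (fun j : Fin (m+1) => v ⟨j.val, by have := j.isLt; omega⟩))
    have lhs_eq : ∑' w : Fin (m+(k+1)+1) → Q,
        ePath π P (m+(k+1)) w * g (fun j : Fin (m+1) => w ⟨j.val, by have := j.isLt; omega⟩)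
        = ∑' w : Fin (m+k+2) → Q, ePath π P (m+k+1) w *
            (fun v : Fin (m+k+1) → Q =>
              g (fun j : Fin (m+1) => v ⟨j.val, by have := j.isLt; omega⟩)) (Fin.init w) := by
      refine tsum_congr fun w => ?_
      dsimp only
      congr 1
    rw [lhs_eq, step]
    exact ih m g

include hPnn hProw hπnn hπ1 hstat in
lemma margGen : ∀ (i k m : ℕ) (g : (Fin (m+1) → Q) → ℝ≥0∞),
    ∑' w : Fin ((m+k)+i+1) → Q,
      ePath π P ((m+k)+i) w * g (fun j : Fin (m+1) => w ⟨i + j.val, by have := j.isLt; omega⟩)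
      = ∑' u : Fin (m+1) → Q, ePath π P m u * g u := by
  intro i
  induction i with
  | zero =>
    intro k m g
    have h := margFirst π P hPnn hProw k m g
    rw [← h]
    refine tsum_congr fun w => ?_
    congr 1
    exact congrArg g (funext fun j => congrArg w (Fin.ext (Nat.zero_add _)))
  | succ i ih =>
    intro k m g
    have step := consSum π P hPnn hProw hπnn hπ1 hstat ((m+k)+i)
      (fun v : Fin ((m+k)+i+1) → Q =>
        g (fun j : Fin (m+1) => v ⟨i + j.val, by have := j.isLt; omega⟩))
    have lhs_eq : ∑' w : Fin ((m+k)+(i+1)+1) → Q,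
        ePath π P ((m+k)+(i+1)) w *
          g (fun j : Fin (m+1) => w ⟨(i+1) + j.val, by have := j.isLt; omega⟩)
        = ∑' w : Fin ((m+k)+i+2) → Q, ePath π P ((m+k)+i+1) w *
            (fun v : Fin ((m+k)+i+1) → Q =>
              g (fun j : Fin (m+1) => v ⟨i + j.val, by have := j.isLt; omega⟩))
            (fun j' : Fin ((m+k)+i+1) => w j'.succ) := by
      refine tsum_congr fun w => ?_
      dsimp only
      congr 1
      exact congrArg g (funext fun j => congrArg w (Fin.ext (by simp [Fin.succ]; omega)))
    rw [lhs_eq, step]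
    exact ih k m g

include hPnn hProw hπnn hπ1 hstat in
lemma margGen' (t i m : ℕ) (h : i + m ≤ t) (g : (Fin (m+1) → Q) → ℝ≥0∞) :
    ∑' w : Fin (t+1) → Q,
      ePath π P t w * g (fun j : Fin (m+1) => w ⟨i + j.val, by have := j.isLt; omega⟩)
      = ∑' u : Fin (m+1) → Q, ePath π P m u * g u := by
  obtain ⟨k, hk⟩ : ∃ k, t = m + k + i := ⟨t - m - i, by omega⟩
  subst hk
  exact margGen π P hPnn hProw hπnn hπ1 hstat i k m g

omit [Countable Q] in
include hπnn hPnn in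
lemma pathProb_nonneg (t : ℕ) (ht : 1 ≤ t) (w : Fin t → Q) :
    0 ≤ pathProb π P t ht w :=
  mul_nonneg (hπnn _) (Finset.prod_nonneg fun j _ => hPnn _ _)

omit [Countable Q] in
include hπnn hPnn in
lemma ofReal_pathProb (t : ℕ) (ht : 1 ≤ t + 1) (w : Fin (t+1) → Q) :
    ENNReal.ofReal (pathProb π P (t+1) ht w) = ePath π P t w := by
  unfold pathProb ePath
  rw [ENNReal.ofReal_mul (hπnn _), ENNReal.ofReal_prod_of_nonneg (fun j _ => hPnn _ _)]
  congr 1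

lemma real_of_ereal {α : Type*} {F : α → ℝ} {B : ℝ≥0∞} (hnn : ∀ x, 0 ≤ F x)
    (h : ∑' x, ENNReal.ofReal (F x) = B) (hne : B ≠ ⊤) :
    Summable F ∧ ∑' x, F x = B.toReal := by
  have hs : Summable (fun x => (ENNReal.ofReal (F x)).toReal) :=
    ENNReal.summable_toReal (by rw [h]; exact hne)
  have hcong : (fun x => (ENNReal.ofReal (F x)).toReal) = F :=
    funext fun x => ENNReal.toReal_ofReal (hnn x)
  constructor
  · rw [← hcong]; exact hs
  · rw [← h, ENNReal.tsum_toReal_eq (fun x => ENNReal.ofReal_ne_top)]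
    exact tsum_congr fun x => (ENNReal.toReal_ofReal (hnn x)).symm

end Aux

/-- fully explicit, measure-free form of unbiasedness. The
expectation of the sliding-window average over state paths of length `t`
(weighted by `π(q₁) ∏ P(q_j, q_{j+1})`) equals
`∑_{q^B ∈ Qⁿ} f(ℓ(q₁^B),…,ℓ(q_n^B)) · π(q₁^B) · ∏_{j=1}^{n-1} P(q_j^B, q_{j+1}^B)`. -/
theorem estimator_unbiased_explicit {Q σ : Type*} [Countable Q]
    (P : Q → Q → ℝ) (π : Q → ℝ) (ℓ : Q → σ)
    (hPnn : ∀ q q', 0 ≤ P q q') (hProw : ∀ q, ∑' q', P q q' = 1)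
    (hπnn : ∀ q, 0 ≤ π q) (hπ1 : ∑' q, π q = 1)
    (hstat : ∀ q', ∑' q, π q * P q q' = π q')
    (n t : ℕ) (hn : 1 ≤ n) (hnt : n ≤ t)
    (a b : ℝ) (f : (Fin n → σ) → ℝ) (hf : ∀ v, f v ∈ Set.Icc a b) :
    (∑' w : Fin t → Q,
        pathProb π P t (by omega) w *
          ((((t - n + 1 : ℕ) : ℝ))⁻¹ *
            ∑ i : Fin (t - n + 1),
              f (fun j => ℓ (w ⟨i.val + j.val, by have := i.isLt; have := j.isLt; omega⟩))))
      = ∑' u : Fin n → Q,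
          f (fun j => ℓ (u j)) *
            (π (u ⟨0, hn⟩) *
              ∏ j : Fin (n - 1),
                P (u ⟨j.val, by have := j.isLt; omega⟩)
                  (u ⟨j.val + 1, by have := j.isLt; omega⟩)) := by
  obtain ⟨m, rfl⟩ : ∃ m, n = m + 1 := ⟨n - 1, by omega⟩
  obtain ⟨s, rfl⟩ : ∃ s, t = s + 1 := ⟨t - 1, by omega⟩
  have hms : m ≤ s := by omega
  set N : ℕ := s + 1 - (m + 1) + 1 with hNdef
  have hNpos : 0 < N := by omega
  have hNR : ((N:ℝ)) ≠ 0 := Nat.cast_ne_zero.mpr (by omega)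
  set g : (Fin (m+1) → Q) → ℝ≥0∞ :=
    fun u => ENNReal.ofReal (f (fun j => ℓ (u j)) - a) with hg
  set B : ℝ≥0∞ := ∑' u : Fin (m+1) → Q, ePath π P m u * g u with hB
  -- B is finite
  have hfa : ∀ v, 0 ≤ f v - a := fun v => by have := (hf v).1; linarith
  have hfb : ∀ v, f v - a ≤ b - a := fun v => by have := (hf v).2; linarith
  have hBne : B ≠ ⊤ := by
    have h1 : B ≤ ∑' u : Fin (m+1) → Q, ePath π P m u * ENNReal.ofReal (b - a) := by
      refine Summable.tsum_le_tsum (fun u => ?_) ENNReal.summable ENNReal.summable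
      exact mul_le_mul_right (ENNReal.ofReal_le_ofReal (hfb _)) _
    rw [ENNReal.tsum_mul_right, mass π P hPnn hProw hπnn hπ1 m, one_mul] at h1
    exact (lt_of_le_of_lt h1 ENNReal.ofReal_lt_top).ne
  -- window marginals
  have hwin : ∀ i : Fin N, ∑' w : Fin (s+1) → Q,
      ePath π P s w *
        g (fun j : Fin (m+1) =>
          w ⟨i.val + j.val, by have := i.isLt; have := j.isLt; omega⟩) = B := by
    intro i
    exact margGen' π P hPnn hProw hπnn hπ1 hstat s i.val m (by have := i.isLt; omega) g
  -- ENNReal identity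
  have hEN : ∑' w : Fin (s+1) → Q,
      ePath π P s w * (ENNReal.ofReal ((N:ℝ)⁻¹) *
        ∑ i : Fin N, g (fun j : Fin (m+1) =>
          w ⟨i.val + j.val, by have := i.isLt; have := j.isLt; omega⟩)) = B := by
    have hsplit : ∀ w : Fin (s+1) → Q,
        ePath π P s w * (ENNReal.ofReal ((N:ℝ)⁻¹) *
          ∑ i : Fin N, g (fun j : Fin (m+1) =>
            w ⟨i.val + j.val, by have := i.isLt; have := j.isLt; omega⟩))
        = ∑ i : Fin N, ENNReal.ofReal ((N:ℝ)⁻¹) *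
            (ePath π P s w * g (fun j : Fin (m+1) =>
              w ⟨i.val + j.val, by have := i.isLt; have := j.isLt; omega⟩)) := by
      intro w
      rw [Finset.mul_sum, Finset.mul_sum]
      exact Finset.sum_congr rfl fun i _ => by ring
    rw [tsum_congr hsplit, Summable.tsum_finsetSum (fun i _ => ENNReal.summable)]
    have hterm : ∀ i : Fin N, (∑' w : Fin (s+1) → Q, ENNReal.ofReal ((N:ℝ)⁻¹) *
        (ePath π P s w * g (fun j : Fin (m+1) =>
          w ⟨i.val + j.val, by have := i.isLt; have := j.isLt; omega⟩)))
        = ENNReal.ofReal ((N:ℝ)⁻¹) * B := by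
      intro i
      rw [ENNReal.tsum_mul_left, hwin i]
    rw [Finset.sum_congr rfl (fun i _ => hterm i), Finset.sum_const, Finset.card_univ,
      Fintype.card_fin, nsmul_eq_mul, ← mul_assoc,
      ENNReal.ofReal_inv_of_pos (by positivity : (0:ℝ) < (N:ℝ)), ENNReal.ofReal_natCast,
      ENNReal.mul_inv_cancel (Nat.cast_ne_zero.mpr (by omega)) (ENNReal.natCast_ne_top N),
      one_mul]
  -- real mass for length s+1
  have hW := real_of_ereal (F := fun w : Fin (s+1) → Q =>
      pathProb π P (s+1) (by omega) w) (B := 1)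
    (fun w => pathProb_nonneg π P hPnn hπnn _ _ w)
    (by
      rw [tsum_congr (fun w => ofReal_pathProb π P hPnn hπnn s (by omega) w)]
      exact mass π P hPnn hProw hπnn hπ1 s)
    ENNReal.one_ne_top
  -- real mass for length m+1
  have hWm := real_of_ereal (F := fun u : Fin (m+1) → Q =>
      pathProb π P (m+1) (by omega) u) (B := 1)
    (fun u => pathProb_nonneg π P hPnn hπnn _ _ u)
    (by
      rw [tsum_congr (fun u => ofReal_pathProb π P hPnn hπnn m (by omega) u)]
      exact mass π P hPnn hProw hπnn hπ1 m)
    ENNReal.one_ne_top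
  -- centered sliding-window function
  have hF := real_of_ereal (F := fun w : Fin (s+1) → Q =>
      pathProb π P (s+1) (by omega) w * ((N:ℝ)⁻¹ *
        ∑ i : Fin N, (f (fun j => ℓ (w ⟨i.val + j.val,
          by have := i.isLt; have := j.isLt; omega⟩)) - a))) (B := B)
    (fun w => mul_nonneg (pathProb_nonneg π P hPnn hπnn _ _ w)
      (mul_nonneg (by positivity) (Finset.sum_nonneg fun i _ => hfa _)))
    (by
      rw [← hEN]
      refine tsum_congr fun w => ?_
      rw [ENNReal.ofReal_mul (pathProb_nonneg π P hPnn hπnn _ _ w),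
        ofReal_pathProb π P hPnn hπnn s (by omega) w,
        ENNReal.ofReal_mul (by positivity : (0:ℝ) ≤ ((N:ℝ))⁻¹),
        ENNReal.ofReal_sum_of_nonneg (fun i _ => hfa _)])
    hBne
  -- centered base function
  have hG := real_of_ereal (F := fun u : Fin (m+1) → Q =>
      (f (fun j => ℓ (u j)) - a) * pathProb π P (m+1) (by omega) u) (B := B)
    (fun u => mul_nonneg (hfa _) (pathProb_nonneg π P hPnn hπnn _ _ u))
    (by
      have h1 : ∀ u : Fin (m+1) → Q, ENNReal.ofReal ((f (fun j => ℓ (u j)) - a) *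
          pathProb π P (m+1) (by omega) u) = ePath π P m u * g u := by
        intro u
        rw [ENNReal.ofReal_mul (hfa _), ofReal_pathProb π P hPnn hπnn m (by omega) u, mul_comm]
      rw [tsum_congr h1])
    hBne
  -- LHS computation
  have hL : (∑' w : Fin (s+1) → Q,
      pathProb π P (s+1) (by omega) w * (((N:ℕ):ℝ)⁻¹ *
        ∑ i : Fin N, f (fun j : Fin (m+1) => ℓ (w ⟨i.val + j.val,
          by have := i.isLt; have := j.isLt; omega⟩)))) = B.toReal + a := by
    have key : ∀ w : Fin (s+1) → Q,
        pathProb π P (s+1) (by omega) w * (((N:ℕ):ℝ)⁻¹ *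
          ∑ i : Fin N, f (fun j : Fin (m+1) => ℓ (w ⟨i.val + j.val,
            by have := i.isLt; have := j.isLt; omega⟩)))
        = (pathProb π P (s+1) (by omega) w * (((N:ℕ):ℝ)⁻¹ *
            ∑ i : Fin N, (f (fun j : Fin (m+1) => ℓ (w ⟨i.val + j.val,
              by have := i.isLt; have := j.isLt; omega⟩)) - a)))
          + pathProb π P (s+1) (by omega) w * a := by
      intro w
      have hseq : ∑ i : Fin N, f (fun j : Fin (m+1) => ℓ (w ⟨i.val + j.val,
            by have := i.isLt; have := j.isLt; omega⟩))
          = (∑ i : Fin N, (f (fun j : Fin (m+1) => ℓ (w ⟨i.val + j.val,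
              by have := i.isLt; have := j.isLt; omega⟩)) - a)) + (N:ℝ) * a := by
        rw [Finset.sum_sub_distrib, Finset.sum_const, Finset.card_univ, Fintype.card_fin,
          nsmul_eq_mul]
        ring
      rw [hseq]
      have h2 : ((N:ℕ):ℝ)⁻¹ * ((∑ i : Fin N, (f (fun j : Fin (m+1) => ℓ (w ⟨i.val + j.val,
            by have := i.isLt; have := j.isLt; omega⟩)) - a)) + (N:ℝ) * a)
          = ((N:ℕ):ℝ)⁻¹ * (∑ i : Fin N, (f (fun j : Fin (m+1) => ℓ (w ⟨i.val + j.val,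
            by have := i.isLt; have := j.isLt; omega⟩)) - a)) + a := by
        field_simp
      rw [h2, mul_add]
    calc ∑' w : Fin (s+1) → Q,
        pathProb π P (s+1) (by omega) w * (((N:ℕ):ℝ)⁻¹ *
          ∑ i : Fin N, f (fun j : Fin (m+1) => ℓ (w ⟨i.val + j.val,
            by have := i.isLt; have := j.isLt; omega⟩)))
        = ∑' w : Fin (s+1) → Q,
          ((pathProb π P (s+1) (by omega) w * (((N:ℕ):ℝ)⁻¹ *
            ∑ i : Fin N, (f (fun j : Fin (m+1) => ℓ (w ⟨i.val + j.val,
              by have := i.isLt; have := j.isLt; omega⟩)) - a)))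
          + pathProb π P (s+1) (by omega) w * a) := tsum_congr key
      _ = (∑' w : Fin (s+1) → Q, pathProb π P (s+1) (by omega) w * (((N:ℕ):ℝ)⁻¹ *
            ∑ i : Fin N, (f (fun j : Fin (m+1) => ℓ (w ⟨i.val + j.val,
              by have := i.isLt; have := j.isLt; omega⟩)) - a)))
          + ∑' w : Fin (s+1) → Q, pathProb π P (s+1) (by omega) w * a :=
          Summable.tsum_add hF.1 (hW.1.mul_right a)
      _ = B.toReal + a := by
          refine congrArg₂ (· + ·) hF.2 ?_
          calc (∑' w : Fin (s+1) → Q, pathProb π P (s+1) (by omega) w * a)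
              = (∑' w : Fin (s+1) → Q, pathProb π P (s+1) (by omega) w) * a :=
                tsum_mul_right
            _ = a := by rw [hW.2, ENNReal.toReal_one, one_mul]
  -- RHS computation
  have hR : (∑' u : Fin (m+1) → Q,
      f (fun j => ℓ (u j)) * pathProb π P (m+1) (by omega) u) = B.toReal + a := by
    have key : ∀ u : Fin (m+1) → Q,
        f (fun j => ℓ (u j)) * pathProb π P (m+1) (by omega) u
        = (f (fun j => ℓ (u j)) - a) * pathProb π P (m+1) (by omega) u
          + pathProb π P (m+1) (by omega) u * a := fun u => by ring
    calc ∑' u : Fin (m+1) → Q, f (fun j => ℓ (u j)) * pathProb π P (m+1) (by omega) u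
        = ∑' u : Fin (m+1) → Q,
          ((f (fun j => ℓ (u j)) - a) * pathProb π P (m+1) (by omega) u
            + pathProb π P (m+1) (by omega) u * a) := tsum_congr key
      _ = (∑' u : Fin (m+1) → Q,
            (f (fun j => ℓ (u j)) - a) * pathProb π P (m+1) (by omega) u)
          + ∑' u : Fin (m+1) → Q, pathProb π P (m+1) (by omega) u * a :=
          Summable.tsum_add hG.1 (hWm.1.mul_right a)
      _ = B.toReal + a := by
          refine congrArg₂ (· + ·) hG.2 ?_
          calc (∑' u : Fin (m+1) → Q, pathProb π P (m+1) (by omega) u * a)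
              = (∑' u : Fin (m+1) → Q, pathProb π P (m+1) (by omega) u) * a :=
                tsum_mul_right
            _ = a := by rw [hWm.2, ENNReal.toReal_one, one_mul]
  exact hL.trans hR.symm
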